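/- Let K₁,K₂,K₃ > 0, t ≥ 0 and define η(C) = ∫₀^{π/2} (K₁cos²u + K₃sin²u)^{1/2} · (C - K₂²t²cos²u/(K₂cos²u + K₃sin²u))^{-1/2} du for C > K₂t². Then η is strictly monotone decreasing, η(C) → ∞ as C → (K₂t²)⁺, η(C) → 0 as C → ∞, and hence for each α > 0 the equation η(C) = α has a unique solution C_α > K₂t². -/

import Mathlib

open Real Set Filter Topology intervalIntegral

set_option maxHeartbeats 2000000 in
theorem height_map_general_constants (K₁ K₂ K₃ t : ℝ)
    (hK₁ : 0 < K₁) (hK₂ : 0 < K₂) (hK₃ : 0 < K₃) (ht : 0 ≤ t) :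
    let η : ℝ → ℝ := fun C =>
      ∫ u in (0 : ℝ)..(π / 2),
        Real.sqrt (K₁ * Real.cos u ^ 2 + K₃ * Real.sin u ^ 2) /
          Real.sqrt (C - K₂ ^ 2 * t ^ 2 * Real.cos u ^ 2 /
            (K₂ * Real.cos u ^ 2 + K₃ * Real.sin u ^ 2))
    StrictAntiOn η (Set.Ioi (K₂ * t ^ 2)) ∧
    Filter.Tendsto η (𝓝[>] (K₂ * t ^ 2)) Filter.atTop ∧
    Filter.Tendsto η Filter.atTop (𝓝 0) ∧
    ∀ α : ℝ, 0 < α → ∃! C : ℝ, C ∈ Set.Ioi (K₂ * t ^ 2) ∧ η C = α := by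
  intro η
  have hπ : (0:ℝ) < π / 2 := by positivity
  set c : ℝ := K₂ * t ^ 2 with hc
  have hkey : ∀ (a b : ℝ), 0 ≤ a → 0 ≤ b → ∀ u : ℝ,
      min a b ≤ a * Real.cos u ^ 2 + b * Real.sin u ^ 2 := by
    intro a b ha hb u
    have h := Real.sin_sq_add_cos_sq u
    have h1 := mul_le_mul_of_nonneg_right (min_le_left a b) (sq_nonneg (Real.cos u))
    have h2 := mul_le_mul_of_nonneg_right (min_le_right a b) (sq_nonneg (Real.sin u))
    have h3 : min a b * Real.sin u ^ 2 + min a b * Real.cos u ^ 2 = min a b := by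
      rw [← mul_add, h, mul_one]
    linarith
  have hD : ∀ u : ℝ, 0 < K₂ * Real.cos u ^ 2 + K₃ * Real.sin u ^ 2 :=
    fun u => lt_of_lt_of_le (lt_min hK₂ hK₃) (hkey K₂ K₃ hK₂.le hK₃.le u)
  have hD₁ : ∀ u : ℝ, 0 < K₁ * Real.cos u ^ 2 + K₃ * Real.sin u ^ 2 :=
    fun u => lt_of_lt_of_le (lt_min hK₁ hK₃) (hkey K₁ K₃ hK₁.le hK₃.le u)
  set g : ℝ → ℝ := fun u => K₂ ^ 2 * t ^ 2 * Real.cos u ^ 2 /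
      (K₂ * Real.cos u ^ 2 + K₃ * Real.sin u ^ 2) with hgdef
  set f : ℝ → ℝ := fun u => Real.sqrt (K₁ * Real.cos u ^ 2 + K₃ * Real.sin u ^ 2) with hfdef
  have hη : ∀ C, η C = ∫ u in (0:ℝ)..(π/2), f u / Real.sqrt (C - g u) := fun _ => rfl
  have hg_le : ∀ u : ℝ, g u ≤ c := by
    intro u
    have h0 : 0 ≤ K₂ * K₃ * t ^ 2 * Real.sin u ^ 2 := by positivity
    rw [hgdef]
    rw [div_le_iff₀ (hD u), hc]
    nlinarith [h0]
  have hden : ∀ C u : ℝ, c < C → 0 < C - g u := by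
    intro C u h; have := hg_le u; linarith
  have hsd : ∀ C u : ℝ, c < C → 0 < Real.sqrt (C - g u) :=
    fun C u h => Real.sqrt_pos.2 (hden C u h)
  have hfpos : ∀ u, 0 < f u := fun u => Real.sqrt_pos.2 (hD₁ u)
  have hfM : ∀ u, f u ≤ Real.sqrt (K₁ + K₃) := by
    intro u
    apply Real.sqrt_le_sqrt
    nlinarith [Real.sin_sq_le_one u, Real.cos_sq_le_one u, sq_nonneg (Real.sin u),
      sq_nonneg (Real.cos u)]
  have hmin : 0 < min K₁ K₃ := lt_min hK₁ hK₃
  have hm_pos : 0 < Real.sqrt (min K₁ K₃) := Real.sqrt_pos.2 hmin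
  have hfm : ∀ u, Real.sqrt (min K₁ K₃) ≤ f u := by
    intro u
    exact Real.sqrt_le_sqrt (hkey K₁ K₃ hK₁.le hK₃.le u)
  have hgc : Continuous g := by
    rw [hgdef]
    exact Continuous.div (by fun_prop) (by fun_prop) (fun u => (hD u).ne')
  have hfc : Continuous f := by
    rw [hfdef]; fun_prop
  have hcont : ∀ C : ℝ, c < C → Continuous (fun u => f u / Real.sqrt (C - g u)) := by
    intro C hC
    exact hfc.div (Real.continuous_sqrt.comp (continuous_const.sub hgc))
      (fun u => (hsd C u hC).ne')
  have hint : ∀ C : ℝ, c < C →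
      IntervalIntegrable (fun u => f u / Real.sqrt (C - g u)) MeasureTheory.volume 0 (π/2) :=
    fun C hC => (hcont C hC).intervalIntegrable _ _
  have hnonneg : ∀ C u : ℝ, 0 ≤ f u / Real.sqrt (C - g u) :=
    fun C u => div_nonneg (Real.sqrt_nonneg _) (Real.sqrt_nonneg _)
  -- Part 1
  have part1 : StrictAntiOn η (Set.Ioi c) := by
    intro C₁ hC₁ C₂ hC₂ hlt
    rw [Set.mem_Ioi] at hC₁ hC₂
    rw [hη, hη]
    have key : 0 < ∫ u in (0:ℝ)..(π/2),
        (f u / Real.sqrt (C₁ - g u) - f u / Real.sqrt (C₂ - g u)) := by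
      apply intervalIntegral_pos_of_pos_on ((hint C₁ hC₁).sub (hint C₂ hC₂))
      · intro u _
        have h1 := hden C₁ u hC₁
        have hs : Real.sqrt (C₁ - g u) < Real.sqrt (C₂ - g u) :=
          Real.sqrt_lt_sqrt h1.le (by linarith)
        have := div_lt_div_of_pos_left (hfpos u) (Real.sqrt_pos.2 h1) hs
        linarith
      · exact hπ
    rw [intervalIntegral.integral_sub (hint C₁ hC₁) (hint C₂ hC₂)] at key
    linarith
  -- upper bound
  have upper : ∀ C : ℝ, c < C →
      η C ≤ π/2 * (Real.sqrt (K₁ + K₃) / Real.sqrt (C - c)) := by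
    intro C hC
    have hCc : 0 < C - c := by linarith
    rw [hη]
    calc (∫ u in (0:ℝ)..(π/2), f u / Real.sqrt (C - g u))
        ≤ ∫ _u in (0:ℝ)..(π/2), Real.sqrt (K₁ + K₃) / Real.sqrt (C - c) := by
          apply intervalIntegral.integral_mono_on hπ.le (hint C hC)
            intervalIntegrable_const
          intro u _
          exact div_le_div₀ (Real.sqrt_nonneg _) (hfM u) (Real.sqrt_pos.2 hCc)
            (Real.sqrt_le_sqrt (by have := hg_le u; linarith))
      _ = π/2 * (Real.sqrt (K₁ + K₃) / Real.sqrt (C - c)) := by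
          rw [intervalIntegral.integral_const, smul_eq_mul, sub_zero]
  have hηnonneg : ∀ C : ℝ, 0 ≤ η C := by
    intro C
    rw [hη]
    exact intervalIntegral.integral_nonneg hπ.le (fun u _ => hnonneg C u)
  -- Part 3
  have sqrt_atTop : Tendsto Real.sqrt atTop atTop := by
    apply tendsto_atTop_atTop.2
    intro b
    refine ⟨b^2, fun x hx => ?_⟩
    rcases le_or_gt b 0 with hb | hb
    · exact hb.trans (Real.sqrt_nonneg x)
    · exact (Real.le_sqrt hb.le (le_trans (sq_nonneg b) hx)).2 hx
  have part3 : Tendsto η atTop (𝓝 0) := by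
    have hbd : Tendsto (fun C : ℝ => π/2 * (Real.sqrt (K₁ + K₃) / Real.sqrt (C - c)))
        atTop (𝓝 0) := by
      have h1 : Tendsto (fun C : ℝ => Real.sqrt (C - c)) atTop atTop :=
        sqrt_atTop.comp (tendsto_atTop_add_const_right _ (-c) tendsto_id)
      have h2 : Tendsto (fun C : ℝ => Real.sqrt (K₁ + K₃) / Real.sqrt (C - c))
          atTop (𝓝 0) := Tendsto.div_atTop tendsto_const_nhds h1
      simpa using h2.const_mul (π/2)
    apply tendsto_of_tendsto_of_tendsto_of_le_of_le' tendsto_const_nhds hbd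
    · exact Eventually.of_forall hηnonneg
    · filter_upwards [eventually_gt_atTop c] with C hC using upper C hC
  -- key integral computation
  have hcont2 : ∀ ε : ℝ, 0 < ε → Continuous fun u : ℝ => (Real.sqrt (ε + u^2))⁻¹ := by
    intro ε hε
    apply Continuous.inv₀
    · exact Real.continuous_sqrt.comp (by fun_prop)
    · exact fun u => (Real.sqrt_pos.2 (by positivity)).ne'
  have key_int : ∀ ε : ℝ, 0 < ε →
      (∫ u in (0:ℝ)..(π/2), (Real.sqrt (ε + u^2))⁻¹)
        = Real.arsinh ((π/2) / Real.sqrt ε) := by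
    intro ε hε
    have hsε : 0 < Real.sqrt ε := Real.sqrt_pos.2 hε
    have hderiv : ∀ u ∈ Set.uIcc (0:ℝ) (π/2),
        HasDerivAt (fun x => Real.arsinh (x / Real.sqrt ε))
          ((Real.sqrt (ε + u^2))⁻¹) u := by
      intro u _
      have h1 : HasDerivAt (fun x : ℝ => x / Real.sqrt ε) ((Real.sqrt ε)⁻¹) u := by
        simpa using (hasDerivAt_id u).div_const (Real.sqrt ε)
      have h2 := (Real.hasDerivAt_arsinh (u / Real.sqrt ε)).comp u h1
      refine h2.congr_deriv ?_
      have hsq : (u / Real.sqrt ε)^2 = u^2 / ε := by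
        rw [div_pow, Real.sq_sqrt hε.le]
      have hmul : ε + u^2 = (1 + (u / Real.sqrt ε)^2) * ε := by
        rw [hsq]; field_simp
      rw [hmul, Real.sqrt_mul (by positivity), mul_inv]
    rw [intervalIntegral.integral_eq_sub_of_hasDerivAt hderiv
      ((hcont2 ε hε).intervalIntegrable _ _)]
    simp
  -- lower bound for η near c
  set B : ℝ := K₂ * K₃ * t ^ 2 / min K₂ K₃ with hBdef
  have hB : 0 ≤ B := by positivity
  have hBu : ∀ u ∈ Set.Icc (0:ℝ) (π/2), c - g u ≤ B * u ^ 2 := by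
    intro u hu
    have hminD : min K₂ K₃ ≤ K₂ * Real.cos u ^ 2 + K₃ * Real.sin u ^ 2 :=
      hkey K₂ K₃ hK₂.le hK₃.le u
    have hmin23 : 0 < min K₂ K₃ := lt_min hK₂ hK₃
    have e1 : c - g u = K₂ * K₃ * t ^ 2 * Real.sin u ^ 2 /
        (K₂ * Real.cos u ^ 2 + K₃ * Real.sin u ^ 2) := by
      rw [eq_div_iff (hD u).ne', hgdef, hc, sub_mul,
        div_mul_cancel₀ _ (hD u).ne']
      ring
    have e2 : K₂ * K₃ * t ^ 2 * Real.sin u ^ 2 /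
        (K₂ * Real.cos u ^ 2 + K₃ * Real.sin u ^ 2)
        ≤ K₂ * K₃ * t ^ 2 * Real.sin u ^ 2 / min K₂ K₃ :=
      div_le_div_of_nonneg_left (by positivity) hmin23 hminD
    have hsin : Real.sin u ^ 2 ≤ u ^ 2 := by
      have h1 : Real.sin u ≤ u := Real.sin_le hu.1
      have h2 : 0 ≤ Real.sin u := Real.sin_nonneg_of_nonneg_of_le_pi hu.1
        (hu.2.trans (by linarith [Real.pi_pos]))
      nlinarith
    have e3 : K₂ * K₃ * t ^ 2 * Real.sin u ^ 2 / min K₂ K₃ ≤ B * u ^ 2 := by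
      have hBe : B * u ^ 2 = K₂ * K₃ * t ^ 2 * u ^ 2 / min K₂ K₃ := by
        rw [hBdef]; ring
      rw [hBe]
      gcongr
    linarith [e1 ▸ (e2.trans e3)]
  have hlow : ∀ ε : ℝ, 0 < ε →
      Real.sqrt (min K₁ K₃) / Real.sqrt (B + 1) * Real.arsinh ((π/2) / Real.sqrt ε)
        ≤ η (c + ε) := by
    intro ε hε
    have hcε : c < c + ε := by linarith
    rw [hη]
    have hptwise : ∀ u ∈ Set.Icc (0:ℝ) (π/2),
        Real.sqrt (min K₁ K₃) / Real.sqrt (B + 1) * (Real.sqrt (ε + u^2))⁻¹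
          ≤ f u / Real.sqrt ((c + ε) - g u) := by
      intro u hu
      have h1 : (c + ε) - g u ≤ (B + 1) * (ε + u ^ 2) := by
        have := hBu u hu
        nlinarith [sq_nonneg u]
      have h2 : Real.sqrt ((c + ε) - g u)
          ≤ Real.sqrt (B + 1) * Real.sqrt (ε + u ^ 2) := by
        rw [← Real.sqrt_mul (by linarith)]
        exact Real.sqrt_le_sqrt h1
      have hd1 : 0 < Real.sqrt ((c + ε) - g u) := hsd _ u hcε
      have heq : Real.sqrt (min K₁ K₃) / Real.sqrt (B + 1) * (Real.sqrt (ε + u^2))⁻¹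
          = Real.sqrt (min K₁ K₃) / (Real.sqrt (B + 1) * Real.sqrt (ε + u^2)) := by
        rw [div_mul_eq_div_div_swap, div_div]
        ring_nf
      rw [heq]
      exact div_le_div₀ (Real.sqrt_nonneg _) (hfm u) hd1 h2
    calc Real.sqrt (min K₁ K₃) / Real.sqrt (B + 1) * Real.arsinh ((π/2) / Real.sqrt ε)
        = ∫ u in (0:ℝ)..(π/2),
            Real.sqrt (min K₁ K₃) / Real.sqrt (B + 1) * (Real.sqrt (ε + u^2))⁻¹ := by
          rw [intervalIntegral.integral_const_mul, key_int ε hε]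
      _ ≤ ∫ u in (0:ℝ)..(π/2), f u / Real.sqrt ((c + ε) - g u) := by
          apply intervalIntegral.integral_mono_on hπ.le
            ((continuous_const.mul (hcont2 ε hε)).intervalIntegrable _ _)
            (hint _ hcε) hptwise
  -- Part 2
  have part2 : Tendsto η (𝓝[>] c) atTop := by
    rw [tendsto_atTop]
    intro M
    set m' : ℝ := Real.sqrt (min K₁ K₃) / Real.sqrt (B + 1) with hm'def
    have hm'pos : 0 < m' := div_pos hm_pos (Real.sqrt_pos.2 (by linarith))
    set x₀ : ℝ := max (Real.sinh (M / m')) 1 with hx₀def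
    have hx₀ : 0 < x₀ := lt_of_lt_of_le one_pos (le_max_right _ _)
    set ε : ℝ := ((π/2) / x₀) ^ 2 with hεdef
    have hεpos : 0 < ε := by positivity
    have hsqrtε : Real.sqrt ε = (π/2) / x₀ := Real.sqrt_sq (by positivity)
    have harg : (π/2) / Real.sqrt ε = x₀ := by
      rw [hsqrtε]
      field_simp
    have hMle : M ≤ m' * Real.arsinh ((π/2) / Real.sqrt ε) := by
      rw [harg]
      have h1 : M / m' ≤ Real.arsinh x₀ := by
        calc M / m' = Real.arsinh (Real.sinh (M / m')) := (Real.arsinh_sinh _).symm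
          _ ≤ Real.arsinh x₀ := Real.arsinh_le_arsinh.2 (le_max_left _ _)
      calc M = m' * (M / m') := by field_simp
        _ ≤ m' * Real.arsinh x₀ := mul_le_mul_of_nonneg_left h1 hm'pos.le
    have hM' : M ≤ η (c + ε) := hMle.trans (hlow ε hεpos)
    filter_upwards [Ioc_mem_nhdsGT (show c < c + ε by linarith)] with C hC
    rcases eq_or_lt_of_le hC.2 with h | h
    · rw [h]; exact hM'
    · exact hM'.trans (part1 hC.1 (Set.mem_Ioi.2 (by linarith)) h).le
  -- continuity of η on Ioi c
  have hcontOn : ContinuousOn η (Set.Ioi c) := by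
    intro C₀ hC₀
    rw [Set.mem_Ioi] at hC₀
    have hfun : η = fun C => ∫ u in (0:ℝ)..(π/2), f u / Real.sqrt (C - g u) :=
      funext hη
    rw [hfun]
    set δ : ℝ := (C₀ - c) / 2 with hδdef
    have hδ : 0 < δ := by rw [hδdef]; linarith
    have hmem : Set.Ioo (c + δ) (C₀ + 1) ∈ 𝓝[Set.Ioi c] C₀ :=
      nhdsWithin_le_nhds (Ioo_mem_nhds (by rw [hδdef]; linarith) (by linarith))
    have : Tendsto (fun C => ∫ u in (0:ℝ)..(π/2), f u / Real.sqrt (C - g u))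
        (𝓝[Set.Ioi c] C₀)
        (𝓝 (∫ u in (0:ℝ)..(π/2), f u / Real.sqrt (C₀ - g u))) := by
      apply intervalIntegral.tendsto_integral_filter_of_dominated_convergence
        (fun _ => Real.sqrt (K₁ + K₃) / Real.sqrt δ)
      · filter_upwards [hmem] with C hC
        exact (hcont C (by linarith [hC.1])).aestronglyMeasurable
      · filter_upwards [hmem] with C hC
        apply Eventually.of_forall
        intro u _
        have hCc : c < C := by linarith [hC.1]
        rw [Real.norm_eq_abs, abs_of_nonneg (hnonneg C u)]
        refine div_le_div₀ (Real.sqrt_nonneg _) (hfM u) (Real.sqrt_pos.2 hδ)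
          (Real.sqrt_le_sqrt ?_)
        have := hg_le u
        linarith [hC.1]
      · exact intervalIntegrable_const
      · apply Eventually.of_forall
        intro u _
        have hca : ContinuousAt (fun C : ℝ => f u / Real.sqrt (C - g u)) C₀ := by
          apply ContinuousAt.div continuousAt_const
          · exact Real.continuous_sqrt.continuousAt.comp
              ((continuous_id.sub continuous_const).continuousAt)
          · exact (hsd C₀ u hC₀).ne'
        exact hca.continuousWithinAt
    exact this
  -- Part 4
  refine ⟨part1, part2, part3, ?_⟩
  intro α hα
  obtain ⟨C₁, hC₁mem, hC₁⟩ : ∃ C₁, C₁ ∈ Set.Ioi c ∧ α ≤ η C₁ := by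
    have h1 : ∀ᶠ C in 𝓝[>] c, C ∈ Set.Ioi c ∧ α ≤ η C :=
      eventually_mem_nhdsWithin.and (part2.eventually_ge_atTop α)
    exact h1.exists
  obtain ⟨C₂, hC₂gt, hC₂⟩ : ∃ C₂, C₁ < C₂ ∧ η C₂ ≤ α := by
    have h2 : ∀ᶠ C in atTop, C₁ < C ∧ η C ≤ α :=
      (eventually_gt_atTop C₁).and ((part3.eventually_lt_const hα).mono fun _ h => h.le)
    exact h2.exists
  rw [Set.mem_Ioi] at hC₁mem
  have hsub : Set.Icc C₁ C₂ ⊆ Set.Ioi c := fun x hx => lt_of_lt_of_le hC₁mem hx.1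
  have hIVT := intermediate_value_Icc' hC₂gt.le (hcontOn.mono hsub)
  obtain ⟨C, hCmem, hCeq⟩ := hIVT ⟨hC₂, hC₁⟩
  refine ⟨C, ⟨hsub hCmem, hCeq⟩, ?_⟩
  rintro C' ⟨hC'mem, hC'eq⟩
  exact part1.injOn hC'mem (hsub hCmem) (by rw [hC'eq, hCeq])
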